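/- arXiv:1410.5272 — 4 statements merged into one kernel-verified Lean document; each statement's English description precedes it below -/
import Mathlib

section
/- Let s > 0, let μ be a Radon measure on ℝ^d, and let φ : [0,∞) → ℝ be a C^∞ function supported in [0,2] which is constant on [0,1/2]. Then there is a constant c, depending only on φ (and on s, d), such that for every x ∈ ℝ^d and all 0 ≤ r_1 < r_2, ∫_{r_1}^{r_2} |Δ^s_{μ,φ}(x,r)| dr/r ≤ c ∫_{r_1/2}^{2r_2} |Δ^s_μ(x,r)| dr/r. -/
open MeasureTheory Metric Set ENNReal Filter Topology

/-- The average `s`-dimensional density `μ(B(x,r))/r^s`. -/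
noncomputable def ballDensity {d : ℕ} (μ : Measure (EuclideanSpace ℝ (Fin d))) (s : ℝ)
    (x : EuclideanSpace ℝ (Fin d)) (r : ℝ) : ℝ :=
  (μ (ball x r)).toReal / r ^ s

/-- `Δ^s_μ(x,r) = μ(B(x,r))/r^s − μ(B(x,2r))/(2r)^s`. -/
noncomputable def deltaDensity {d : ℕ} (μ : Measure (EuclideanSpace ℝ (Fin d))) (s : ℝ)
    (x : EuclideanSpace ℝ (Fin d)) (r : ℝ) : ℝ :=
  ballDensity μ s x r - ballDensity μ s x (2 * r)

/-- `Δ^s_{μ,φ}(x,t) = ∫ (φ_t(|y−x|) − φ_{2t}(|y−x|)) dμ(y)` where `φ_t(u) = t^{−s} φ(u/t)`. -/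
noncomputable def deltaPhi {d : ℕ} (μ : Measure (EuclideanSpace ℝ (Fin d))) (s : ℝ)
    (φ : ℝ → ℝ) (x : EuclideanSpace ℝ (Fin d)) (t : ℝ) : ℝ :=
  ∫ y, (φ (dist y x / t) / t ^ s - φ (dist y x / (2 * t)) / (2 * t) ^ s) ∂μ

section Aux

variable {φ : ℝ → ℝ}


lemma phi_zero_of_le_half' (hφ_smooth : ContDiff ℝ (⊤ : ℕ∞) φ)
    (hφ_supp : Function.support φ ⊆ Icc (0 : ℝ) 2)
    (hφ_const : ∀ u ∈ Icc (0 : ℝ) (1 / 2), φ u = φ 0) :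
    ∀ u ≤ (1 / 2 : ℝ), φ u = 0 := by
  have hzero : ∀ u < (0 : ℝ), φ u = 0 := by
    intro u hu
    by_contra h
    exact absurd (hφ_supp (Function.mem_support.2 h)).1 (not_le.2 hu)
  have h0 : φ 0 = 0 := by
    have h1 : Tendsto φ (𝓝[<] (0 : ℝ)) (𝓝 (φ 0)) :=
      (hφ_smooth.continuous.tendsto 0).mono_left nhdsWithin_le_nhds
    have h2 : Tendsto φ (𝓝[<] (0 : ℝ)) (𝓝 0) := by
      apply Tendsto.congr' _ tendsto_const_nhds
      filter_upwards [self_mem_nhdsWithin] with u hu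
      exact (hzero u hu).symm
    exact tendsto_nhds_unique h1 h2
  intro u hu
  rcases lt_or_ge u 0 with h | h
  · exact hzero u h
  · rw [hφ_const u ⟨h, hu⟩, h0]

lemma deriv_phi_supp' (hφ_smooth : ContDiff ℝ (⊤ : ℕ∞) φ)
    (hφ_supp : Function.support φ ⊆ Icc (0 : ℝ) 2)
    (hφ_const : ∀ u ∈ Icc (0 : ℝ) (1 / 2), φ u = φ 0) :
    ∀ v, v ∉ Icc (1 / 2 : ℝ) 2 → deriv φ v = 0 := by
  have hz := phi_zero_of_le_half' hφ_smooth hφ_supp hφ_const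
  intro v hv
  rw [mem_Icc, not_and_or, not_le, not_le] at hv
  rcases hv with hv | hv
  · have h : φ =ᶠ[𝓝 v] (fun _ => (0 : ℝ)) := by
      filter_upwards [Iio_mem_nhds hv] with u hu
      exact hz u (le_of_lt hu)
    rw [h.deriv_eq]
    exact deriv_const v 0
  · have h : φ =ᶠ[𝓝 v] (fun _ => (0 : ℝ)) := by
      filter_upwards [Ioi_mem_nhds hv] with u hu
      by_contra hne
      exact absurd (hφ_supp (Function.mem_support.2 hne)).2 (not_le.2 hu)
    rw [h.deriv_eq]
    exact deriv_const v 0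

lemma phi_eq_integral_deriv' (hφ_smooth : ContDiff ℝ (⊤ : ℕ∞) φ)
    (hφ_supp : Function.support φ ⊆ Icc (0 : ℝ) 2)
    (hφ_const : ∀ u ∈ Icc (0 : ℝ) (1 / 2), φ u = φ 0) (a : ℝ) :
    φ a = -∫ v in Ioi a, deriv φ v := by
  have hds := deriv_phi_supp' hφ_smooth hφ_supp hφ_const
  have hderiv_cont : Continuous (deriv φ) := hφ_smooth.continuous_deriv (by exact_mod_cast le_top)
  have hcs : HasCompactSupport (deriv φ) := HasCompactSupport.intro isCompact_Icc hds
  have hint : Integrable (deriv φ) volume := hderiv_cont.integrable_of_hasCompactSupport hcs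
  set M := max 3 (a + 1) with hM
  have haM : a ≤ M := le_trans (le_of_lt (lt_add_one a)) (le_max_right _ _)
  have hM2 : (2 : ℝ) < M := lt_of_lt_of_le (by norm_num) (le_max_left _ _)
  have hftc : ∫ v in a..M, deriv φ v = φ M - φ a := by
    apply intervalIntegral.integral_deriv_eq_sub
    · exact fun y _ => (hφ_smooth.differentiable (by simp)).differentiableAt
    · exact hint.intervalIntegrable
  have hφM : φ M = 0 := by
    by_contra h
    exact absurd (hφ_supp (Function.mem_support.2 h)).2 (not_le.2 hM2)
  have hdisj : Disjoint (Ioc a M) (Ioi M) :=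
    Set.disjoint_left.2 fun v hv hv' => absurd hv.2 (not_le.2 hv')
  have hsplit := setIntegral_union hdisj measurableSet_Ioi hint.integrableOn hint.integrableOn
    (f := deriv φ) (μ := volume)
  rw [Set.Ioc_union_Ioi_eq_Ioi haM] at hsplit
  have hIoiM : ∫ v in Ioi M, deriv φ v = 0 :=
    setIntegral_eq_zero_of_forall_eq_zero fun v hv =>
      hds v fun hmem => absurd hmem.2 (not_le.2 (lt_trans hM2 hv))
  rw [hsplit, hIoiM, add_zero, ← intervalIntegral.integral_of_le haM, hftc, hφM]
  ring



variable {d : ℕ}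

lemma integral_phi_eq (hφ_smooth : ContDiff ℝ (⊤ : ℕ∞) φ)
    (hφ_supp : Function.support φ ⊆ Icc (0 : ℝ) 2)
    (hφ_const : ∀ u ∈ Icc (0 : ℝ) (1 / 2), φ u = φ 0)
    (μ : Measure (EuclideanSpace ℝ (Fin d))) [IsLocallyFiniteMeasure μ]
    (x : EuclideanSpace ℝ (Fin d)) (t : ℝ) (ht : 0 < t) :
    ∫ y, φ (dist y x / t) ∂μ = -∫ v, deriv φ v * (μ (ball x (t * v))).toReal := by
  have hds := deriv_phi_supp' hφ_smooth hφ_supp hφ_const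
  have hderiv_cont : Continuous (deriv φ) := hφ_smooth.continuous_deriv (by exact_mod_cast le_top)
  have hcs : HasCompactSupport (deriv φ) := HasCompactSupport.intro isCompact_Icc hds
  -- a uniform bound on |deriv φ|
  obtain ⟨v₀, hv₀⟩ := hderiv_cont.abs.exists_forall_ge_of_hasCompactSupport (hcs.abs)
  set C := |deriv φ v₀| with hCdef
  have hC : ∀ v, |deriv φ v| ≤ C := hv₀
  set F : EuclideanSpace ℝ (Fin d) × ℝ → ℝ :=
    fun p => if dist p.1 x < t * p.2 then deriv φ p.2 else 0 with hF
  have hmeasset : MeasurableSet {p : EuclideanSpace ℝ (Fin d) × ℝ | dist p.1 x < t * p.2} :=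
    measurableSet_lt ((continuous_fst.dist continuous_const).measurable)
      ((continuous_const.mul continuous_snd).measurable)
  have hFmeas : Measurable F :=
    Measurable.ite hmeasset (hderiv_cont.measurable.comp measurable_snd) measurable_const
  have hbox : (μ.prod volume) (closedBall x (2 * t) ×ˢ Icc (1 / 2 : ℝ) 2) < ⊤ := by
    rw [Measure.prod_prod]
    exact ENNReal.mul_lt_top measure_closedBall_lt_top measure_Icc_lt_top
  have hFint : Integrable F (μ.prod volume) := by
    apply Integrable.mono'
      (g := (closedBall x (2 * t) ×ˢ Icc (1 / 2 : ℝ) 2).indicator fun _ => C)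
    · exact (integrable_indicator_iff (measurableSet_closedBall.prod measurableSet_Icc)).2
        (integrableOn_const hbox.ne)
    · exact hFmeas.aestronglyMeasurable
    · apply ae_of_all
      intro p
      by_cases hp : p ∈ closedBall x (2 * t) ×ˢ Icc (1 / 2 : ℝ) 2
      · rw [indicator_of_mem hp]
        rw [hF]
        simp only [Real.norm_eq_abs]
        split
        · exact hC p.2
        · simpa using le_trans (abs_nonneg _) (hC p.2)
      · rw [indicator_of_notMem hp]
        have hzero : F p = 0 := by
          rw [hF]
          simp only
          split
          · rename_i hlt
            by_contra h
            have hmem : p.2 ∈ Icc (1 / 2 : ℝ) 2 := by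
              by_contra hmem
              exact h (hds p.2 hmem)
            exact hp ⟨mem_closedBall.2 (le_trans hlt.le (by nlinarith [hmem.2, ht.le])),
              hmem⟩
          · rfl
        simp [hzero]
  have hpt : ∀ y, φ (dist y x / t) = -∫ v, F (y, v) := by
    intro y
    have hFind : ∀ v, F (y, v) = (Ioi (dist y x / t)).indicator (deriv φ) v := by
      intro v
      rw [hF]
      simp only
      by_cases hv : v ∈ Ioi (dist y x / t)
      · rw [indicator_of_mem hv, if_pos (by rw [mul_comm]; exact (div_lt_iff₀ ht).1 hv)]
      · rw [indicator_of_notMem hv,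
          if_neg (fun hlt => hv (mem_Ioi.2 ((div_lt_iff₀ ht).2 (by linarith [hlt] : dist y x < v * t))))]
    rw [phi_eq_integral_deriv' hφ_smooth hφ_supp hφ_const (dist y x / t)]
    congr 1
    rw [← integral_indicator measurableSet_Ioi]
    exact integral_congr_ae (ae_of_all _ fun v => (hFind v).symm)
  haveI : SigmaFinite μ := sigmaFinite_of_locallyFinite
  calc ∫ y, φ (dist y x / t) ∂μ = ∫ y, (-∫ v, F (y, v)) ∂μ :=
        integral_congr_ae (ae_of_all _ fun y => hpt y)
    _ = -∫ y, ∫ v, F (y, v) ∂volume ∂μ := integral_neg _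
    _ = -∫ v, ∫ y, F (y, v) ∂μ ∂volume := by
        rw [integral_integral_swap (by exact hFint)]
    _ = -∫ v, deriv φ v * (μ (ball x (t * v))).toReal := by
        congr 1
        apply integral_congr_ae (ae_of_all _ ?_)
        intro v
        have heq : (fun y => F (y, v)) =
            fun y => deriv φ v * (ball x (t * v)).indicator (fun _ => (1 : ℝ)) y := by
          funext y
          rw [hF]
          simp only
          by_cases hy : y ∈ ball x (t * v)
          · rw [indicator_of_mem hy, if_pos (mem_ball.1 hy)]
            ring
          · rw [indicator_of_notMem hy, if_neg (fun hlt => hy (mem_ball.2 hlt))]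
            ring
        rw [heq, integral_const_mul, integral_indicator_const (1 : ℝ) measurableSet_ball]
        simp [Measure.real]

lemma deltaPhi_eq {s : ℝ} (hs : 0 < s) (hφ_smooth : ContDiff ℝ (⊤ : ℕ∞) φ)
    (hφ_supp : Function.support φ ⊆ Icc (0 : ℝ) 2)
    (hφ_const : ∀ u ∈ Icc (0 : ℝ) (1 / 2), φ u = φ 0)
    (μ : Measure (EuclideanSpace ℝ (Fin d))) [IsLocallyFiniteMeasure μ]
    (x : EuclideanSpace ℝ (Fin d)) (t : ℝ) (ht : 0 < t) :
    deltaPhi μ s φ x t = -∫ v, deriv φ v * v ^ s * deltaDensity μ s x (t * v) := by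
  have hds := deriv_phi_supp' hφ_smooth hφ_supp hφ_const
  have hderiv_cont : Continuous (deriv φ) := hφ_smooth.continuous_deriv (by exact_mod_cast le_top)
  have hcs : HasCompactSupport (deriv φ) := HasCompactSupport.intro isCompact_Icc hds
  obtain ⟨v₀, hC⟩ := hderiv_cont.abs.exists_forall_ge_of_hasCompactSupport (hcs.abs)
  set C := |deriv φ v₀| with hCdef
  have h2t : 0 < 2 * t := by linarith
  -- integrability of the two pieces in y
  have hinty : ∀ τ : ℝ, 0 < τ → Integrable (fun y => φ (dist y x / τ)) μ := by
    intro τ hτ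
    apply Continuous.integrable_of_hasCompactSupport
    · exact hφ_smooth.continuous.comp ((continuous_id.dist continuous_const).div_const τ)
    · apply HasCompactSupport.intro (isCompact_closedBall x (2 * τ))
      intro y hy
      by_contra h
      have hmem := hφ_supp (Function.mem_support.2 h)
      exact hy (mem_closedBall.2 ((div_le_iff₀ hτ).1 hmem.2))
  -- integrability in v
  have hmono : ∀ r₀ : ℝ, 0 < r₀ → Monotone fun v => μ (ball x (r₀ * v)) := by
    intro r₀ hr₀ v w hvw
    exact measure_mono (ball_subset_ball (by nlinarith))
  have hmeasm : ∀ r₀ : ℝ, 0 < r₀ → Measurable fun v => (μ (ball x (r₀ * v))).toReal := by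
    intro r₀ hr₀
    exact ENNReal.measurable_toReal.comp ((hmono r₀ hr₀).measurable)
  have hintm : ∀ r₀ : ℝ, 0 < r₀ →
      Integrable (fun v => deriv φ v * (μ (ball x (r₀ * v))).toReal) volume := by
    intro r₀ hr₀
    apply Integrable.mono'
      (g := (Icc (1 / 2 : ℝ) 2).indicator fun _ => C * (μ (ball x (r₀ * 2))).toReal)
    · exact (integrable_indicator_iff measurableSet_Icc).2
        (integrableOn_const measure_Icc_lt_top.ne)
    · exact (hderiv_cont.measurable.mul (hmeasm r₀ hr₀)).aestronglyMeasurable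
    · apply ae_of_all
      intro v
      by_cases hv : v ∈ Icc (1 / 2 : ℝ) 2
      · rw [indicator_of_mem hv, Real.norm_eq_abs, abs_mul,
          abs_of_nonneg ENNReal.toReal_nonneg]
        apply mul_le_mul (hC v) _ ENNReal.toReal_nonneg (le_trans (abs_nonneg _) (hC v))
        exact ENNReal.toReal_mono measure_ball_lt_top.ne
          (measure_mono (ball_subset_ball (by nlinarith [hv.2, hr₀.le])))
      · rw [indicator_of_notMem hv]
        simp [hds v hv]
  have hA := integral_phi_eq hφ_smooth hφ_supp hφ_const μ x t ht
  have hB := integral_phi_eq hφ_smooth hφ_supp hφ_const μ x (2 * t) h2t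
  have hts : (0 : ℝ) < t ^ s := Real.rpow_pos_of_pos ht s
  have h2ts : (0 : ℝ) < (2 * t) ^ s := Real.rpow_pos_of_pos h2t s
  have step1 : deltaPhi μ s φ x t
      = (∫ y, φ (dist y x / t) ∂μ) / t ^ s - (∫ y, φ (dist y x / (2 * t)) ∂μ) / (2 * t) ^ s := by
    unfold deltaPhi
    rw [integral_sub ((hinty t ht).div_const _) ((hinty (2 * t) h2t).div_const _),
      integral_div, integral_div]
  rw [step1, hA, hB]
  have step2 : ∀ τ : ℝ, 0 < τ →
      (-∫ v, deriv φ v * (μ (ball x (τ * v))).toReal) / τ ^ s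
        = -∫ v, deriv φ v * (μ (ball x (τ * v))).toReal / τ ^ s := by
    intro τ hτ
    rw [neg_div, integral_div]
  rw [step2 t ht, step2 (2 * t) h2t]
  rw [show (-∫ v, deriv φ v * (μ (ball x (t * v))).toReal / t ^ s) -
        (-∫ v, deriv φ v * (μ (ball x (2 * t * v))).toReal / (2 * t) ^ s)
      = -((∫ v, deriv φ v * (μ (ball x (t * v))).toReal / t ^ s) -
        (∫ v, deriv φ v * (μ (ball x (2 * t * v))).toReal / (2 * t) ^ s)) by ring]
  rw [← integral_sub ((hintm t ht).div_const _) ((hintm (2 * t) h2t).div_const _)]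
  congr 1
  apply integral_congr_ae (ae_of_all _ ?_)
  intro v
  by_cases hv : v ∈ Icc (1 / 2 : ℝ) 2
  · have hv0 : (0 : ℝ) < v := lt_of_lt_of_le (by norm_num) hv.1
    have hvs : (0 : ℝ) < v ^ s := Real.rpow_pos_of_pos hv0 s
    have h1 : (t * v) ^ s = t ^ s * v ^ s := Real.mul_rpow ht.le hv0.le
    have h2 : (2 * (t * v)) ^ s = (2 * t) ^ s * v ^ s := by
      rw [show 2 * (t * v) = (2 * t) * v by ring, Real.mul_rpow h2t.le hv0.le]
    unfold deltaDensity ballDensity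
    rw [show (2 : ℝ) * t * v = 2 * (t * v) by ring, h1, h2]
    field_simp
  · simp [hds v hv]

end Aux

lemma ofReal_integral_le {f : ℝ → ℝ} (hf : ∀ x, 0 ≤ f x) :
    ENNReal.ofReal (∫ x, f x) ≤ ∫⁻ x, ENNReal.ofReal (f x) := by
  by_cases h : Integrable f volume
  · rw [MeasureTheory.ofReal_integral_eq_lintegral_ofReal h (ae_of_all _ hf)]
  · rw [integral_undef h]
    simp

theorem statement3 (d : ℕ) (s : ℝ) (hs : 0 < s) (φ : ℝ → ℝ)
    (hφ_smooth : ContDiff ℝ (⊤ : ℕ∞) φ)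
    (hφ_supp : Function.support φ ⊆ Icc (0 : ℝ) 2)
    (hφ_const : ∀ u ∈ Icc (0 : ℝ) (1 / 2), φ u = φ 0) :
    ∃ c : ℝ, 0 < c ∧
      ∀ (μ : Measure (EuclideanSpace ℝ (Fin d))) [IsLocallyFiniteMeasure μ],
        ∀ (x : EuclideanSpace ℝ (Fin d)) (r₁ r₂ : ℝ), 0 ≤ r₁ → r₁ < r₂ →
          (∫⁻ r in Ioc r₁ r₂, ENNReal.ofReal (|deltaPhi μ s φ x r| / r))
            ≤ ENNReal.ofReal c *
                ∫⁻ r in Ioc (r₁ / 2) (2 * r₂), ENNReal.ofReal (|deltaDensity μ s x r| / r) := by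
  have hds := deriv_phi_supp' hφ_smooth hφ_supp hφ_const
  have hderiv_cont : Continuous (deriv φ) := hφ_smooth.continuous_deriv (by exact_mod_cast le_top)
  have hcs : HasCompactSupport (deriv φ) := HasCompactSupport.intro isCompact_Icc hds
  set K : ℝ≥0∞ := ∫⁻ v, ENNReal.ofReal |deriv φ v| with hK
  have hKlt : K < ⊤ := by
    have hint : Integrable (deriv φ) volume := hderiv_cont.integrable_of_hasCompactSupport hcs
    have := hint.hasFiniteIntegral
    rw [HasFiniteIntegral] at this
    refine lt_of_le_of_lt (le_of_eq (lintegral_congr fun v => ?_)) this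
    rw [← ofReal_norm_eq_enorm, Real.norm_eq_abs]
  have h2s : (0 : ℝ) < 2 ^ s := Real.rpow_pos_of_pos (by norm_num) s
  refine ⟨4 * 2 ^ s * K.toReal + 1, by positivity, ?_⟩
  intro μ _ x r₁ r₂ hr₁ hr12
  set g : ℝ → ℝ≥0∞ := fun r => ENNReal.ofReal (|deltaDensity μ s x r| / r) with hg
  set I : ℝ≥0∞ := ∫⁻ r in Ioc (r₁ / 2) (2 * r₂), g r with hI
  -- measurability of deltaDensity
  have hm1 : Measurable fun r : ℝ => (μ (ball x r)).toReal :=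
    ENNReal.measurable_toReal.comp
      (Monotone.measurable fun v w hvw => measure_mono (ball_subset_ball hvw))
  have hrpow : Measurable fun r : ℝ => r ^ s := (Real.continuous_rpow_const hs.le).measurable
  have hΔmeas : Measurable fun r => deltaDensity μ s x r := by
    unfold deltaDensity ballDensity
    exact (hm1.div hrpow).sub
      ((hm1.comp (measurable_const_mul 2)).div (hrpow.comp (measurable_const_mul 2)))
  have hgmeas : Measurable g := ENNReal.measurable_ofReal.comp (hΔmeas.abs.div measurable_id)
  set H : ℝ → ℝ → ℝ≥0∞ :=
    fun t v => ENNReal.ofReal (|deriv φ v * v ^ s * deltaDensity μ s x (t * v)| / t) with hH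
  have hHmeas : Measurable (Function.uncurry H) := by
    apply ENNReal.measurable_ofReal.comp
    apply Measurable.div _ measurable_fst
    apply Measurable.abs
    exact ((hderiv_cont.measurable.comp measurable_snd).mul
        (hrpow.comp measurable_snd)).mul
      (hΔmeas.comp (measurable_fst.mul measurable_snd))
  have hr₂0 : 0 < r₂ := lt_of_le_of_lt hr₁ hr12
  have step1 : (∫⁻ r in Ioc r₁ r₂, ENNReal.ofReal (|deltaPhi μ s φ x r| / r))
      ≤ ∫⁻ t in Ioc r₁ r₂, ∫⁻ v, H t v := by
    apply lintegral_mono_ae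
    filter_upwards [ae_restrict_mem measurableSet_Ioc] with t htmem
    have ht0 : 0 < t := lt_of_le_of_lt hr₁ htmem.1
    rw [deltaPhi_eq hs hφ_smooth hφ_supp hφ_const μ x t ht0, abs_neg]
    calc ENNReal.ofReal (|∫ v, deriv φ v * v ^ s * deltaDensity μ s x (t * v)| / t)
        ≤ ENNReal.ofReal ((∫ v, |deriv φ v * v ^ s * deltaDensity μ s x (t * v)|) / t) := by
          apply ENNReal.ofReal_le_ofReal
          gcongr
          · simpa only [Real.norm_eq_abs] using norm_integral_le_integral_norm
              (fun v => deriv φ v * v ^ s * deltaDensity μ s x (t * v)) (μ := volume)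
      _ = ENNReal.ofReal (∫ v, |deriv φ v * v ^ s * deltaDensity μ s x (t * v)| / t) := by
          rw [integral_div]
      _ ≤ ∫⁻ v, H t v := ofReal_integral_le fun v => by positivity
  have step2 : (∫⁻ t in Ioc r₁ r₂, ∫⁻ v, H t v) = ∫⁻ v, ∫⁻ t in Ioc r₁ r₂, H t v :=
    lintegral_lintegral_swap hHmeas.aemeasurable
  have step3 : ∀ v : ℝ, (∫⁻ t in Ioc r₁ r₂, H t v)
      ≤ ENNReal.ofReal |deriv φ v| *
        (ENNReal.ofReal (2 ^ s) * (ENNReal.ofReal 2 * (ENNReal.ofReal 2 * I))) := by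
    intro v
    by_cases hv : v ∈ Icc (1 / 2 : ℝ) 2
    swap
    · have hzero : ∀ t, H t v = 0 := fun t => by
        rw [hH]; simp [hds v hv]
      simp [hzero]
    · have hv0 : (0 : ℝ) < v := lt_of_lt_of_le (by norm_num) hv.1
      have hgm' : Measurable fun t => g (t * v) := hgmeas.comp (measurable_mul_const v)
      have hsub : (∫⁻ t in Ioc r₁ r₂, g (t * v)) ≤ ENNReal.ofReal 2 * I := by
        have hpre : Ioc r₁ r₂ = (· * v) ⁻¹' Ioc (r₁ * v) (r₂ * v) := by
          ext u
          simp only [mem_preimage, mem_Ioc]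
          constructor
          · rintro ⟨h1, h2⟩; exact ⟨by nlinarith, by nlinarith⟩
          · rintro ⟨h1, h2⟩
            exact ⟨by nlinarith, by nlinarith⟩
        have h1 : (∫⁻ t in Ioc r₁ r₂, g (t * v))
            = ENNReal.ofReal |v⁻¹| * ∫⁻ r in Ioc (r₁ * v) (r₂ * v), g r := by
          rw [hpre, ← lintegral_map hgmeas (measurable_mul_const v),
            ← Measure.restrict_map (measurable_mul_const v) measurableSet_Ioc,
            Real.map_volume_mul_right hv0.ne', Measure.restrict_smul,
            lintegral_smul_measure, smul_eq_mul]
        rw [h1]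
        have hmono2 : (∫⁻ r in Ioc (r₁ * v) (r₂ * v), g r) ≤ I := by
          apply lintegral_mono_set
          apply Ioc_subset_Ioc
          · nlinarith [hv.1]
          · nlinarith [hv.2, hr₂0.le]
        apply mul_le_mul' _ hmono2
        apply ENNReal.ofReal_le_ofReal
        rw [abs_of_nonneg (inv_nonneg.2 hv0.le)]
        nlinarith [mul_inv_cancel₀ (ne_of_gt hv0), hv.1, inv_nonneg.2 hv0.le]
      have hptwise : ∀ t ∈ Ioc r₁ r₂, H t v ≤ ENNReal.ofReal |deriv φ v| *
          (ENNReal.ofReal (2 ^ s) * (ENNReal.ofReal 2 * g (t * v))) := by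
        intro t htmem
        have ht0 : 0 < t := lt_of_le_of_lt hr₁ htmem.1
        have htv : 0 < t * v := mul_pos ht0 hv0
        rw [hH, hg]
        simp only
        rw [← ENNReal.ofReal_mul (by norm_num : (0:ℝ) ≤ 2),
          ← ENNReal.ofReal_mul h2s.le,
          ← ENNReal.ofReal_mul (abs_nonneg _)]
        apply ENNReal.ofReal_le_ofReal
        have habs : |deriv φ v * v ^ s * deltaDensity μ s x (t * v)|
            = |deriv φ v| * v ^ s * |deltaDensity μ s x (t * v)| := by
          rw [abs_mul, abs_mul, abs_of_nonneg (Real.rpow_nonneg hv0.le s)]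
        rw [habs]
        have hvs2 : v ^ s ≤ 2 ^ s := Real.rpow_le_rpow hv0.le hv.2 hs.le
        calc |deriv φ v| * v ^ s * |deltaDensity μ s x (t * v)| / t
            = |deriv φ v| * (v ^ s * (v * (|deltaDensity μ s x (t * v)| / (t * v)))) := by
              field_simp
          _ ≤ |deriv φ v| * (2 ^ s * (2 * (|deltaDensity μ s x (t * v)| / (t * v)))) := by
              gcongr
              exact hv.2
      calc (∫⁻ t in Ioc r₁ r₂, H t v)
          ≤ ∫⁻ t in Ioc r₁ r₂, ENNReal.ofReal |deriv φ v| *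
              (ENNReal.ofReal (2 ^ s) * (ENNReal.ofReal 2 * g (t * v))) := by
            apply lintegral_mono_ae
            filter_upwards [ae_restrict_mem measurableSet_Ioc] with t htmem
            exact hptwise t htmem
        _ = ENNReal.ofReal |deriv φ v| * (ENNReal.ofReal (2 ^ s) *
              (ENNReal.ofReal 2 * ∫⁻ t in Ioc r₁ r₂, g (t * v))) := by
            rw [lintegral_const_mul _ ((hgm'.const_mul _).const_mul _),
              lintegral_const_mul _ (hgm'.const_mul _), lintegral_const_mul _ hgm']
        _ ≤ ENNReal.ofReal |deriv φ v| *
              (ENNReal.ofReal (2 ^ s) * (ENNReal.ofReal 2 * (ENNReal.ofReal 2 * I))) := by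
            exact mul_le_mul' le_rfl (mul_le_mul' le_rfl (mul_le_mul' le_rfl hsub))
  by_cases hItop : I = ⊤
  · rw [hItop, ENNReal.mul_top (ENNReal.ofReal_pos.2 (by positivity)).ne']
    exact le_top
  calc (∫⁻ r in Ioc r₁ r₂, ENNReal.ofReal (|deltaPhi μ s φ x r| / r))
      ≤ ∫⁻ t in Ioc r₁ r₂, ∫⁻ v, H t v := step1
    _ = ∫⁻ v, ∫⁻ t in Ioc r₁ r₂, H t v := step2
    _ ≤ ∫⁻ v, ENNReal.ofReal |deriv φ v| *
          (ENNReal.ofReal (2 ^ s) * (ENNReal.ofReal 2 * (ENNReal.ofReal 2 * I))) :=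
        lintegral_mono step3
    _ = K * (ENNReal.ofReal (2 ^ s) * (ENNReal.ofReal 2 * (ENNReal.ofReal 2 * I))) :=
        lintegral_mul_const _ (ENNReal.measurable_ofReal.comp hderiv_cont.abs.measurable)
    _ ≤ ENNReal.ofReal (4 * 2 ^ s * K.toReal + 1) * I := by
        have hKeq : ENNReal.ofReal K.toReal = K := ENNReal.ofReal_toReal hKlt.ne
        calc K * (ENNReal.ofReal (2 ^ s) * (ENNReal.ofReal 2 * (ENNReal.ofReal 2 * I)))
            = ENNReal.ofReal K.toReal * ENNReal.ofReal (2 ^ s) * ENNReal.ofReal 2 *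
                ENNReal.ofReal 2 * I := by
              rw [hKeq]; ring
          _ = ENNReal.ofReal (K.toReal * 2 ^ s * 2 * 2) * I := by
              rw [← ENNReal.ofReal_mul (by positivity),
                ← ENNReal.ofReal_mul (by positivity),
                ← ENNReal.ofReal_mul (by positivity)]
          _ ≤ ENNReal.ofReal (4 * 2 ^ s * K.toReal + 1) * I :=
              mul_le_mul' (ENNReal.ofReal_le_ofReal (by nlinarith [h2s,
                (ENNReal.toReal_nonneg : (0:ℝ) ≤ K.toReal)])) le_rfl
end

section
/- Let s > 0, let μ be a Radon measure on ℝ^d, and let φ : [0,∞) → ℝ be a C^∞ function supported in [0,2] which is constant on [0,1/2]. Then for every x ∈ ℝ^d and every R > 0, Δ^s_{μ,φ}(x,R) = − ∫_{1/2}^{2} t^s φ'(t) Δ^s_μ(x,tR) dt. -/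
open MeasureTheory Metric Set ENNReal Filter

section Aux

variable {φ : ℝ → ℝ}

lemma phi_zero_of_two_le (hφ_smooth : ContDiff ℝ (⊤ : ℕ∞) φ)
    (hφ_supp : Function.support φ ⊆ Icc (0 : ℝ) 2) :
    ∀ u : ℝ, 2 ≤ u → φ u = 0 := by
  have hout : ∀ u : ℝ, 2 < u → φ u = 0 := by
    intro u hu
    by_contra h
    exact absurd (hφ_supp h).2 (not_le.2 hu)
  intro u hu
  rcases eq_or_lt_of_le hu with h | h
  · have h1 : Tendsto φ (nhdsWithin 2 (Ioi 2)) (nhds (φ 2)) :=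
      (hφ_smooth.continuous.tendsto 2).mono_left nhdsWithin_le_nhds
    have h0 : Tendsto φ (nhdsWithin 2 (Ioi 2)) (nhds (0 : ℝ)) := by
      refine Tendsto.congr' ?_ tendsto_const_nhds
      filter_upwards [self_mem_nhdsWithin] with t ht
      exact (hout t ht).symm
    rw [← h]
    exact tendsto_nhds_unique h1 h0
  · exact hout u h

lemma phi_repr (hφ_smooth : ContDiff ℝ (⊤ : ℕ∞) φ)
    (hφ_supp : Function.support φ ⊆ Icc (0 : ℝ) 2)
    (hφ_const : ∀ u ∈ Icc (0 : ℝ) (1 / 2), φ u = φ 0)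
    {u : ℝ} (hu : 0 ≤ u) :
    φ u = -∫ t in Ioc (1 / 2 : ℝ) 2, (Ioi u).indicator (deriv φ) t := by
  have hderiv : ∀ t : ℝ, DifferentiableAt ℝ φ t := fun t =>
    hφ_smooth.differentiable (by simp) t
  have hcd : Continuous (deriv φ) := hφ_smooth.continuous_deriv (by exact_mod_cast le_top)
  have h2 : φ 2 = 0 := phi_zero_of_two_le hφ_smooth hφ_supp 2 le_rfl
  have hset : ∫ t in Ioc (1 / 2 : ℝ) 2, (Ioi u).indicator (deriv φ) t
      = ∫ t in Ioc (max (1 / 2) u) 2, deriv φ t := by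
    rw [integral_indicator measurableSet_Ioi,
      Measure.restrict_restrict measurableSet_Ioi, Set.inter_comm, Ioc_inter_Ioi]
  rw [hset]
  rcases le_or_gt u 2 with hu2 | hu2
  · have hmax : max (1 / 2 : ℝ) u ≤ 2 := max_le (by norm_num) hu2
    rw [← intervalIntegral.integral_of_le hmax,
      intervalIntegral.integral_deriv_eq_sub (fun t _ => hderiv t)
        (hcd.intervalIntegrable _ _), h2]
    rcases le_or_gt u (1 / 2) with hu12 | hu12
    · rw [max_eq_left hu12, hφ_const u ⟨hu, hu12⟩,
        hφ_const (1 / 2) ⟨by norm_num, le_rfl⟩]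
      ring
    · rw [max_eq_right hu12.le]
      ring
  · have : Ioc (max (1 / 2 : ℝ) u) 2 = ∅ := by
      apply Ioc_eq_empty
      exact not_lt.mpr (le_max_of_le_right hu2.le)
    rw [this, Measure.restrict_empty, integral_zero_measure,
      phi_zero_of_two_le hφ_smooth hφ_supp u hu2.le, neg_zero]

lemma integrable_mul_ball {d : ℕ} (μ : Measure (EuclideanSpace ℝ (Fin d)))
    [IsLocallyFiniteMeasure μ]
    (g : ℝ → ℝ) (hg : Continuous g) (x : EuclideanSpace ℝ (Fin d)) (T : ℝ) (hT : 0 < T) :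
    IntegrableOn (fun t => g t * (μ (ball x (t * T))).toReal) (Ioc (1 / 2 : ℝ) 2) := by
  have hmono : MonotoneOn (fun t => (μ (ball x (t * T))).toReal)
      (Set.uIcc (1 / 2 : ℝ) 2) := by
    intro a ha b hb hab
    rw [Set.uIcc_of_le (by norm_num : (1 / 2 : ℝ) ≤ 2)] at ha hb
    have hfin : μ (ball x (b * T)) ≠ ⊤ := measure_ball_lt_top.ne
    exact ENNReal.toReal_mono hfin
      (measure_mono (ball_subset_ball (by nlinarith : a * T ≤ b * T)))
  have := (hmono.intervalIntegrable (μ := volume)).continuousOn_mul hg.continuousOn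
  exact this.1

lemma keyB {d : ℕ} (s : ℝ) (μ : Measure (EuclideanSpace ℝ (Fin d)))
    [IsLocallyFiniteMeasure μ]
    (hφ_smooth : ContDiff ℝ (⊤ : ℕ∞) φ)
    (hφ_supp : Function.support φ ⊆ Icc (0 : ℝ) 2)
    (hφ_const : ∀ u ∈ Icc (0 : ℝ) (1 / 2), φ u = φ 0)
    (x : EuclideanSpace ℝ (Fin d)) (T : ℝ) (hT : 0 < T) :
    ∫ y, φ (dist y x / T) / T ^ s ∂μ
      = -∫ t in Ioc (1 / 2 : ℝ) 2, deriv φ t * (μ (ball x (t * T))).toReal / T ^ s := by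
  have hzero2 : ∀ u : ℝ, 2 ≤ u → φ u = 0 := phi_zero_of_two_le hφ_smooth hφ_supp
  have hcd : Continuous (deriv φ) := hφ_smooth.continuous_deriv (by exact_mod_cast le_top)
  set ν := μ.restrict (ball x (2 * T)) with hν
  have hfin : μ (ball x (2 * T)) < ⊤ := measure_ball_lt_top
  haveI : IsFiniteMeasure ν := ⟨by rw [hν, Measure.restrict_apply_univ]; exact hfin⟩
  have hsupp' : ∀ y, y ∉ ball x (2 * T) → φ (dist y x / T) / T ^ s = 0 := by
    intro y hy
    have h2le : (2 : ℝ) ≤ dist y x / T := by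
      rw [le_div_iff₀ hT]
      simpa [mem_ball, not_lt, mul_comm] using hy
    rw [hzero2 _ h2le, zero_div]
  rw [← setIntegral_eq_integral_of_forall_compl_eq_zero hsupp']
  set F : EuclideanSpace ℝ (Fin d) → ℝ → ℝ :=
    fun y t => deriv φ t * (ball x (t * T)).indicator (fun _ => (1 : ℝ)) y with hF
  have hrepr : ∀ y, φ (dist y x / T) / T ^ s
      = -(∫ t in Ioc (1 / 2 : ℝ) 2, F y t) / T ^ s := by
    intro y
    rw [phi_repr hφ_smooth hφ_supp hφ_const (div_nonneg dist_nonneg hT.le)]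
    have heq : ∀ t : ℝ, (Ioi (dist y x / T)).indicator (deriv φ) t = F y t := by
      intro t
      by_cases h : dist y x / T < t
      · have hy : y ∈ ball x (t * T) := by
          rw [mem_ball]
          exact (div_lt_iff₀ hT).mp h
        simp [hF, Set.indicator_of_mem (show t ∈ Ioi (dist y x / T) from h),
          Set.indicator_of_mem hy]
      · have hy : y ∉ ball x (t * T) := by
          rw [mem_ball]
          exact fun hc => h ((div_lt_iff₀ hT).mpr hc)
        simp [hF, Set.indicator_of_notMem (show t ∉ Ioi (dist y x / T) from h),
          Set.indicator_of_notMem hy]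
    rw [show (fun t => (Ioi (dist y x / T)).indicator (deriv φ) t) = fun t => F y t
      from funext heq]
  simp_rw [hrepr]
  rw [integral_div, integral_neg]
  obtain ⟨t₀, ht₀⟩ : ∃ t₀, ∀ t, |deriv φ t| ≤ |deriv φ t₀| := by
    have h1 : HasCompactSupport φ := HasCompactSupport.intro isCompact_Icc
      (fun u hu => Function.notMem_support.mp (fun h => hu (hφ_supp h)))
    exact (continuous_abs.comp hcd).exists_forall_ge_of_hasCompactSupport h1.deriv.abs
  set C := |deriv φ t₀| with hC
  have hmeas : Measurable (fun p : (EuclideanSpace ℝ (Fin d)) × ℝ => F p.1 p.2) := by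
    apply Measurable.mul
    · exact hcd.measurable.comp measurable_snd
    · have hopen : IsOpen {p : (EuclideanSpace ℝ (Fin d)) × ℝ | dist p.1 x < p.2 * T} := by
        have hc : Continuous fun p : (EuclideanSpace ℝ (Fin d)) × ℝ => dist p.1 x :=
          continuous_fst.dist continuous_const
        exact isOpen_lt hc (continuous_snd.mul continuous_const)
      have hind : (fun p : (EuclideanSpace ℝ (Fin d)) × ℝ =>
          (ball x (p.2 * T)).indicator (fun _ => (1 : ℝ)) p.1)
          = ({p : (EuclideanSpace ℝ (Fin d)) × ℝ | dist p.1 x < p.2 * T}).indicator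
            (fun _ => (1 : ℝ)) := by
        funext p
        by_cases h : dist p.1 x < p.2 * T
        · rw [Set.indicator_of_mem (show p.1 ∈ ball x (p.2 * T) from h),
            Set.indicator_of_mem (show p ∈ _ from h)]
        · rw [Set.indicator_of_notMem (show p.1 ∉ ball x (p.2 * T) from h),
            Set.indicator_of_notMem (show p ∉ _ from h)]
      rw [hind]
      exact measurable_const.indicator hopen.measurableSet
  have hint : Integrable (Function.uncurry F)
      (ν.prod (volume.restrict (Ioc (1 / 2 : ℝ) 2))) := by
    refine Integrable.mono' (integrable_const C) hmeas.aestronglyMeasurable ?_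
    filter_upwards with p
    have h1 : |(ball x (p.2 * T)).indicator (fun _ => (1 : ℝ)) p.1| ≤ 1 := by
      by_cases h : p.1 ∈ ball x (p.2 * T) <;> simp [h]
    calc ‖Function.uncurry F p‖
        = |deriv φ p.2| * |(ball x (p.2 * T)).indicator (fun _ => (1 : ℝ)) p.1| := by
          rw [Function.uncurry]; exact abs_mul _ _
      _ ≤ C * 1 := mul_le_mul (ht₀ p.2) h1 (abs_nonneg _) ((abs_nonneg _).trans (ht₀ t₀))
      _ = C := mul_one C
  rw [MeasureTheory.integral_integral_swap hint]
  have hinner : ∫ t in Ioc (1 / 2 : ℝ) 2, (∫ y, F y t ∂ν)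
      = ∫ t in Ioc (1 / 2 : ℝ) 2, deriv φ t * (μ (ball x (t * T))).toReal := by
    apply setIntegral_congr_fun measurableSet_Ioc
    intro t ht
    have hsub : ball x (t * T) ⊆ ball x (2 * T) :=
      ball_subset_ball (by nlinarith [ht.2] : t * T ≤ 2 * T)
    simp only [hF]
    rw [MeasureTheory.integral_const_mul, integral_indicator_const (1 : ℝ) measurableSet_ball]
    rw [hν, measureReal_def, Measure.restrict_apply measurableSet_ball,
      Set.inter_eq_self_of_subset_left hsub, smul_eq_mul, mul_one]
  rw [hinner, neg_div, integral_div]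

end Aux

theorem statement4 (d : ℕ) (s : ℝ) (hs : 0 < s)
    (μ : Measure (EuclideanSpace ℝ (Fin d))) [IsLocallyFiniteMeasure μ] (φ : ℝ → ℝ)
    (hφ_smooth : ContDiff ℝ (⊤ : ℕ∞) φ)
    (hφ_supp : Function.support φ ⊆ Icc (0 : ℝ) 2)
    (hφ_const : ∀ u ∈ Icc (0 : ℝ) (1 / 2), φ u = φ 0)
    (x : EuclideanSpace ℝ (Fin d)) (R : ℝ) (hR : 0 < R) :
    deltaPhi μ s φ x R = -∫ t in (1 / 2 : ℝ)..2, t ^ s * deriv φ t * deltaDensity μ s x (t * R) := by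
  have hzero2 : ∀ u : ℝ, 2 ≤ u → φ u = 0 := phi_zero_of_two_le hφ_smooth hφ_supp
  have hcd : Continuous (deriv φ) := hφ_smooth.continuous_deriv (by exact_mod_cast le_top)
  have h2R : (0 : ℝ) < 2 * R := by positivity
  -- integrability of the two summands in the μ-integral
  have hintA : ∀ T : ℝ, 0 < T → Integrable (fun y => φ (dist y x / T) / T ^ s) μ := by
    intro T hT
    apply Continuous.integrable_of_hasCompactSupport
    · exact ((hφ_smooth.continuous.comp
        ((continuous_id.dist continuous_const).div_const T)).div_const _)
    · apply HasCompactSupport.intro (isCompact_closedBall x (2 * T))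
      intro y hy
      have h2le : (2 : ℝ) ≤ dist y x / T := by
        rw [le_div_iff₀ hT]
        have h' : ¬ dist y x ≤ 2 * T := fun hc => hy (mem_closedBall.mpr hc)
        push_neg at h'
        linarith
      rw [hzero2 _ h2le, zero_div]
  have hkeyR := keyB s μ hφ_smooth hφ_supp hφ_const x R hR
  have hkey2R := keyB s μ hφ_smooth hφ_supp hφ_const x (2 * R) h2R
  have hintR : IntegrableOn
      (fun t => deriv φ t * (μ (ball x (t * R))).toReal / R ^ s)
      (Ioc (1 / 2 : ℝ) 2) :=
    (integrable_mul_ball μ (deriv φ) hcd x R hR).div_const _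
  have hint2R : IntegrableOn
      (fun t => deriv φ t * (μ (ball x (t * (2 * R)))).toReal / (2 * R) ^ s)
      (Ioc (1 / 2 : ℝ) 2) :=
    (integrable_mul_ball μ (deriv φ) hcd x (2 * R) h2R).div_const _
  unfold deltaPhi
  rw [integral_sub (hintA R hR) (hintA (2 * R) h2R), hkeyR, hkey2R]
  rw [intervalIntegral.integral_of_le (by norm_num : (1 / 2 : ℝ) ≤ 2)]
  have hHeq : EqOn
      (fun t => t ^ s * deriv φ t * deltaDensity μ s x (t * R))
      (fun t => deriv φ t * (μ (ball x (t * R))).toReal / R ^ s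
        - deriv φ t * (μ (ball x (t * (2 * R)))).toReal / (2 * R) ^ s)
      (Ioc (1 / 2 : ℝ) 2) := by
    intro t ht
    have ht0 : (0 : ℝ) < t := lt_trans (by norm_num) ht.1
    simp only [deltaDensity, ballDensity]
    have h1 : ((t * R) : ℝ) ^ s = t ^ s * R ^ s := Real.mul_rpow ht0.le hR.le
    have h2 : ((2 * (t * R)) : ℝ) ^ s = t ^ s * (2 * R) ^ s := by
      rw [show (2 * (t * R) : ℝ) = t * (2 * R) by ring, Real.mul_rpow ht0.le h2R.le]
    have hts : (t : ℝ) ^ s ≠ 0 := (Real.rpow_pos_of_pos ht0 s).ne'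
    have hRs : (R : ℝ) ^ s ≠ 0 := (Real.rpow_pos_of_pos hR s).ne'
    have h2Rs : ((2 * R) : ℝ) ^ s ≠ 0 := (Real.rpow_pos_of_pos h2R s).ne'
    rw [show t * (2 * R) = 2 * (t * R) by ring, h1, h2]
    field_simp
  rw [setIntegral_congr_fun measurableSet_Ioc hHeq, integral_sub hintR hint2R]
  ring
end

section
/- Let s > 0 and let μ be a Radon measure on ℝ^d with 0 ∈ supp(μ), and suppose that Δ^s_μ(x,r) = 0 for every x ∈ supp(μ) and every r > 0. Then, with c_0 = μ(B(0,1)), for every x ∈ supp(μ) and every integer m one has c_0 · 2^{(m−1)s} ≤ μ(B(x, 2^m)) ≤ c_0 · 2^{(m+1)s}; in particular μ is s-Ahlfors–David regular. -/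
open MeasureTheory Metric Set ENNReal Filter

lemma dyadicScaling (s : ℝ) (T : ℝ → ℝ) (doub : ∀ r : ℝ, 0 < r → T (2*r) = 2^s * T r) :
    ∀ m : ℤ, T ((2:ℝ)^m) = (2:ℝ) ^ ((m:ℝ)*s) * T 1 := by
  intro m
  induction m using Int.induction_on with
  | zero => norm_num
  | succ n ih =>
    have h2p : (0:ℝ) < (2:ℝ)^(n:ℤ) := by positivity
    have e : (2:ℝ)^((n:ℤ)+1) = 2 * (2:ℝ)^(n:ℤ) := by rw [zpow_add_one₀ (by norm_num)]; ring
    rw [e, doub _ h2p, ih, ← mul_assoc, ← Real.rpow_add (by norm_num)]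
    push_cast
    ring_nf
  | pred n ih =>
    have h2p : (0:ℝ) < (2:ℝ)^(-(n:ℤ)-1) := by positivity
    have e : (2:ℝ)^(-(n:ℤ)) = 2 * (2:ℝ)^(-(n:ℤ)-1) := by
      rw [show -(n:ℤ) = (-(n:ℤ)-1)+1 by ring, zpow_add_one₀ (by norm_num)]; ring
    rw [e, doub _ h2p] at ih
    have h2s : (0:ℝ) < (2:ℝ)^s := Real.rpow_pos_of_pos (by norm_num) s
    have e2 : (-(n:ℤ)-1 : ℤ) = -((n:ℤ)+1) := by ring
    rw [e2] at ih ⊢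
    have hT : T ((2:ℝ)^(-((n:ℤ)+1))) = (2:ℝ)^((-(n:ℤ):ℝ)*s) * T 1 / 2^s := by
      push_cast at ih ⊢; rw [eq_div_iff h2s.ne', ← ih]; ring
    rw [hT]
    rw [show ((-((n:ℤ)+1):ℤ):ℝ)*s = (-(n:ℤ):ℝ)*s + (-s) by push_cast; ring,
      Real.rpow_add (by norm_num), Real.rpow_neg (by norm_num)]
    field_simp

/-- The support of a measure: points all of whose neighborhoods have positive measure. -/
def msupport {d : ℕ} (μ : Measure (EuclideanSpace ℝ (Fin d))) : Set (EuclideanSpace ℝ (Fin d)) :=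
  {x | ∀ r : ℝ, 0 < r → 0 < μ (ball x r)}

theorem statement6 (d : ℕ) (s : ℝ) (hs : 0 < s)
    (μ : Measure (EuclideanSpace ℝ (Fin d))) [IsLocallyFiniteMeasure μ]
    (h0 : (0 : EuclideanSpace ℝ (Fin d)) ∈ msupport μ)
    (hdelta : ∀ x ∈ msupport μ, ∀ r : ℝ, 0 < r → deltaDensity μ s x r = 0) :
    (∀ x ∈ msupport μ, ∀ m : ℤ,
        μ (ball (0 : EuclideanSpace ℝ (Fin d)) 1) * ENNReal.ofReal ((2 : ℝ) ^ (((m : ℝ) - 1) * s))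
            ≤ μ (ball x ((2 : ℝ) ^ m)) ∧
        μ (ball x ((2 : ℝ) ^ m))
            ≤ μ (ball (0 : EuclideanSpace ℝ (Fin d)) 1) *
                ENNReal.ofReal ((2 : ℝ) ^ (((m : ℝ) + 1) * s))) ∧
      ∃ c : ℝ, 0 < c ∧ ∀ x ∈ msupport μ, ∀ r : ℝ, 0 < r →
        ENNReal.ofReal r ≤ EMetric.diam (msupport μ) →
          ENNReal.ofReal (c⁻¹ * r ^ s) ≤ μ (ball x r) ∧
            μ (ball x r) ≤ ENNReal.ofReal (c * r ^ s) := by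
  classical
  set T : EuclideanSpace ℝ (Fin d) → ℝ → ℝ := fun x r => (μ (ball x r)).toReal with hTdef
  have hfin : ∀ (x : EuclideanSpace ℝ (Fin d)) (r : ℝ), μ (ball x r) ≠ ⊤ :=
    fun x r => measure_ball_lt_top.ne
  have hTnn : ∀ x r, 0 ≤ T x r := fun x r => ENNReal.toReal_nonneg
  have hofReal : ∀ x r, μ (ball x r) = ENNReal.ofReal (T x r) :=
    fun x r => (ENNReal.ofReal_toReal (hfin x r)).symm
  -- doubling
  have doub : ∀ x ∈ msupport μ, ∀ r : ℝ, 0 < r → T x (2*r) = 2^s * T x r := by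
    intro x hx r hr
    have h := hdelta x hx r hr
    have hd : ballDensity μ s x r = ballDensity μ s x (2*r) := sub_eq_zero.mp h
    unfold ballDensity at hd
    have hrs : (0:ℝ) < r ^ s := Real.rpow_pos_of_pos hr s
    have h2r : ((2:ℝ)*r) ^ s = 2^s * r^s := Real.mul_rpow (by norm_num) hr.le
    rw [h2r] at hd
    have h2s : (0:ℝ) < (2:ℝ)^s := Real.rpow_pos_of_pos (by norm_num) s
    field_simp at hd
    nlinarith [hd]
  -- dyadic scaling
  have key : ∀ x ∈ msupport μ, ∀ m : ℤ, T x ((2:ℝ)^m) = (2:ℝ) ^ ((m:ℝ)*s) * T x 1 :=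
    fun x hx => dyadicScaling s (T x) (doub x hx)
  set c0 : ℝ := T 0 1 with hc0def
  have hc0 : 0 < c0 := ENNReal.toReal_pos (h0 1 one_pos).ne' (hfin 0 1)
  have h2s : (0:ℝ) < (2:ℝ)^s := Real.rpow_pos_of_pos (by norm_num) s
  -- comparison of T x 1 with c0
  have hcomp : ∀ x ∈ msupport μ, 2^(-s) * c0 ≤ T x 1 ∧ T x 1 ≤ 2^s * c0 := by
    intro x hx
    obtain ⟨n, hn⟩ : ∃ n : ℕ, ‖x‖ < 2 ^ n := pow_unbounded_of_one_lt ‖x‖ one_lt_two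
    have hpow : ((2:ℝ)^(n:ℤ)) = 2^n := zpow_natCast 2 n
    have hsub1 : ball x ((2:ℝ)^(n:ℤ)) ⊆ ball (0:EuclideanSpace ℝ (Fin d)) ((2:ℝ)^((n:ℤ)+1)) := by
      apply ball_subset_ball'
      rw [dist_zero_right, hpow, zpow_add_one₀ (two_ne_zero), hpow]
      linarith
    have hsub2 : ball (0:EuclideanSpace ℝ (Fin d)) ((2:ℝ)^(n:ℤ)) ⊆ ball x ((2:ℝ)^((n:ℤ)+1)) := by
      apply ball_subset_ball'
      rw [dist_zero_left, hpow, zpow_add_one₀ (two_ne_zero), hpow]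
      linarith
    have hm1 : T x ((2:ℝ)^(n:ℤ)) ≤ T 0 ((2:ℝ)^((n:ℤ)+1)) :=
      ENNReal.toReal_mono (hfin _ _) (measure_mono hsub1)
    have hm2 : T 0 ((2:ℝ)^(n:ℤ)) ≤ T x ((2:ℝ)^((n:ℤ)+1)) :=
      ENNReal.toReal_mono (hfin _ _) (measure_mono hsub2)
    rw [key x hx, key 0 h0] at hm1
    rw [key 0 h0, key x hx] at hm2
    have hexp : (((n:ℤ)+1 : ℤ):ℝ) * s = (n:ℝ)*s + s := by push_cast; ring
    rw [show (((n:ℤ):ℝ)) = (n:ℝ) by push_cast; ring] at hm1 hm2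
    rw [hexp, Real.rpow_add (by norm_num)] at hm1 hm2
    have hns : (0:ℝ) < (2:ℝ)^((n:ℝ)*s) := Real.rpow_pos_of_pos (by norm_num) _
    constructor
    · rw [Real.rpow_neg (by norm_num)]
      rw [inv_mul_le_iff₀ h2s]
      nlinarith [hm2]
    · nlinarith [hm1]
  -- first part
  have part1 : ∀ x ∈ msupport μ, ∀ m : ℤ,
      μ (ball (0 : EuclideanSpace ℝ (Fin d)) 1) * ENNReal.ofReal ((2 : ℝ) ^ (((m : ℝ) - 1) * s))
          ≤ μ (ball x ((2 : ℝ) ^ m)) ∧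
      μ (ball x ((2 : ℝ) ^ m))
          ≤ μ (ball (0 : EuclideanSpace ℝ (Fin d)) 1) *
              ENNReal.ofReal ((2 : ℝ) ^ (((m : ℝ) + 1) * s)) := by
    intro x hx m
    have hms : (0:ℝ) < (2:ℝ)^((m:ℝ)*s) := Real.rpow_pos_of_pos (by norm_num) _
    have e1 : (2:ℝ) ^ (((m:ℝ) - 1) * s) = 2^((m:ℝ)*s) * 2^(-s) := by
      rw [← Real.rpow_add (by norm_num)]; ring_nf
    have e2 : (2:ℝ) ^ (((m:ℝ) + 1) * s) = 2^((m:ℝ)*s) * 2^s := by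
      rw [← Real.rpow_add (by norm_num)]; ring_nf
    have hx1 := hcomp x hx
    have hmb : μ (ball x ((2:ℝ)^m)) = ENNReal.ofReal (2^((m:ℝ)*s) * T x 1) := by
      rw [hofReal x ((2:ℝ)^m), key x hx m]
    rw [hmb, hofReal 0 1]
    have h2sneg : (0:ℝ) < (2:ℝ)^(-s) := Real.rpow_pos_of_pos (by norm_num) _
    constructor
    · rw [← ENNReal.ofReal_mul (hTnn 0 1)]
      apply ENNReal.ofReal_le_ofReal
      rw [e1]
      nlinarith [hx1.1]
    · rw [← ENNReal.ofReal_mul (hTnn 0 1)]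
      apply ENNReal.ofReal_le_ofReal
      rw [e2]
      nlinarith [hx1.2]
  refine ⟨part1, max (c0 * 2^(2*s)) (c0⁻¹ * 2^(2*s)), ?_, ?_⟩
  · have : (0:ℝ) < c0 * 2^(2*s) := by positivity
    exact lt_max_of_lt_left this
  intro x hx r hr _
  set c : ℝ := max (c0 * 2^(2*s)) (c0⁻¹ * 2^(2*s)) with hcdef
  have hcpos : 0 < c := lt_max_of_lt_left (by positivity)
  obtain ⟨m, hm⟩ := exists_mem_Ico_zpow hr one_lt_two
  have hm1 : (2:ℝ)^m ≤ r := hm.1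
  have hm2 : r < (2:ℝ)^(m+1) := hm.2
  set A : ℝ := (2:ℝ)^((m:ℝ)*s) with hA
  have hApos : 0 < A := Real.rpow_pos_of_pos (by norm_num) _
  -- rpow of zpow
  have hz : ∀ k : ℤ, ((2:ℝ)^k) ^ s = (2:ℝ)^((k:ℝ)*s) := by
    intro k
    rw [← Real.rpow_intCast 2 k, ← Real.rpow_mul (by norm_num)]
  have hrsA : r ^ s ≤ A * 2^s := by
    have : r ^ s ≤ ((2:ℝ)^(m+1)) ^ s :=
      Real.rpow_le_rpow hr.le hm2.le hs.le
    rw [hz (m+1)] at this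
    rw [show ((m+1:ℤ):ℝ)*s = (m:ℝ)*s + s by push_cast; ring, Real.rpow_add (by norm_num)] at this
    exact this
  have hArs : A ≤ r ^ s := by
    have : ((2:ℝ)^m) ^ s ≤ r ^ s :=
      Real.rpow_le_rpow (by positivity) hm1 hs.le
    rwa [hz m] at this
  have h22s : (2:ℝ)^(2*s) = 2^s * 2^s := by
    rw [show (2:ℝ)*s = s + s by ring, Real.rpow_add (by norm_num)]
  have hx1 := hcomp x hx
  have hxlow : 2^(-s) * c0 ≤ T x 1 := hx1.1
  have hxup : T x 1 ≤ 2^s * c0 := hx1.2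
  have h2sneg : (2:ℝ)^(-s) = (2^s)⁻¹ := Real.rpow_neg (by norm_num) s
  constructor
  · -- lower bound
    have hsubset : ball x ((2:ℝ)^m) ⊆ ball x r := ball_subset_ball hm1
    have step : ENNReal.ofReal (c⁻¹ * r^s) ≤ μ (ball x ((2:ℝ)^m)) := by
      rw [hofReal x ((2:ℝ)^m), key x hx m, ← hA]
      apply ENNReal.ofReal_le_ofReal
      have hcinv : c⁻¹ ≤ (c0⁻¹ * 2^(2*s))⁻¹ := by
        apply inv_anti₀ (by positivity)
        exact le_max_right _ _
      have heq : (c0⁻¹ * 2^(2*s))⁻¹ = c0 * (2^(2*s))⁻¹ := by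
        rw [mul_inv, inv_inv]
      have hrpos : 0 < r ^ s := Real.rpow_pos_of_pos hr s
      calc c⁻¹ * r^s ≤ (c0 * (2^(2*s))⁻¹) * (A * 2^s) := by
            apply mul_le_mul (heq ▸ hcinv) hrsA hrpos.le (by positivity)
        _ = A * ((2^s)⁻¹ * c0) := by rw [h22s]; field_simp
        _ ≤ A * T x 1 := by
            apply mul_le_mul_of_nonneg_left _ hApos.le
            rw [← h2sneg]; exact hxlow
    exact step.trans (measure_mono hsubset)
  · -- upper bound
    have hsubset : ball x r ⊆ ball x ((2:ℝ)^(m+1)) := ball_subset_ball hm2.le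
    have step : μ (ball x ((2:ℝ)^(m+1))) ≤ ENNReal.ofReal (c * r^s) := by
      rw [hofReal x ((2:ℝ)^(m+1)), key x hx (m+1)]
      apply ENNReal.ofReal_le_ofReal
      rw [show ((m+1:ℤ):ℝ)*s = (m:ℝ)*s + s by push_cast; ring, Real.rpow_add (by norm_num), ← hA]
      have hcge : c0 * 2^(2*s) ≤ c := le_max_left _ _
      calc A * 2^s * T x 1 ≤ A * 2^s * (2^s * c0) := by
            apply mul_le_mul_of_nonneg_left hxup (by positivity)
        _ = (c0 * 2^(2*s)) * A := by rw [h22s]; ring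
        _ ≤ c * A := by apply mul_le_mul_of_nonneg_right hcge hApos.le
        _ ≤ c * r^s := by apply mul_le_mul_of_nonneg_left hArs hcpos.le
    exact (measure_mono hsubset).trans step
end

section
/- Let 0 < s < d and let μ be a Radon measure on ℝ^d. If ∫ Ẇ^μ_s(x) dμ(x) < ∞, then lim_{r→∞} μ(B(0,r))³ / r^{2s} = 0. -/
open MeasureTheory Metric Set ENNReal Filter

/-- The Wolff potential `Ẇ^μ_s(x) = ∫_0^∞ (μ(B(x,r))/r^s)² dr/r`. -/
noncomputable def wolffPot {d : ℕ} (μ : Measure (EuclideanSpace ℝ (Fin d))) (s : ℝ)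
    (x : EuclideanSpace ℝ (Fin d)) : ℝ≥0∞ :=
  ∫⁻ r in Ioi (0 : ℝ), ENNReal.ofReal (ballDensity μ s x r ^ 2 / r)

section Aux

variable {d : ℕ} {s : ℝ} {μ : Measure (EuclideanSpace ℝ (Fin d))} [IsLocallyFiniteMeasure μ]

lemma meas_integrand :
    Measurable (fun p : (EuclideanSpace ℝ (Fin d)) × ℝ =>
      ENNReal.ofReal (ballDensity μ s p.1 p.2 ^ 2 / p.2)) := by
  have hb : Measurable (fun p : (EuclideanSpace ℝ (Fin d)) × ℝ => μ (ball p.1 p.2)) := by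
    have : ∀ p : (EuclideanSpace ℝ (Fin d)) × ℝ, ball p.1 p.2 = Prod.mk p ⁻¹'
        {q : ((EuclideanSpace ℝ (Fin d)) × ℝ) × (EuclideanSpace ℝ (Fin d)) |
          dist q.2 q.1.1 < q.1.2} := by
      intro p; ext y; simp [ball, dist_comm]
    simp_rw [this]
    exact measurable_measure_prodMk_left (by apply measurableSet_lt <;> fun_prop)
  unfold ballDensity
  apply ENNReal.measurable_ofReal.comp
  apply Measurable.div _ measurable_snd
  apply Measurable.pow _ measurable_const
  exact hb.ennreal_toReal.div (by measurability)

/-- The tail of the integrated Wolff potential. -/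
noncomputable def wolffTail (μ : Measure (EuclideanSpace ℝ (Fin d))) (s : ℝ) (R : ℝ) : ℝ≥0∞ :=
  ∫⁻ x, (∫⁻ r in Ioi R, ENNReal.ofReal (ballDensity μ s x r ^ 2 / r)) ∂μ

lemma meas_inner (R : ℝ) :
    Measurable (fun x => ∫⁻ r in Ioi R, ENNReal.ofReal (ballDensity μ s x r ^ 2 / r)) :=
  Measurable.lintegral_prod_right' (f := fun p : _ × ℝ =>
    ENNReal.ofReal (ballDensity μ s p.1 p.2 ^ 2 / p.2)) meas_integrand

lemma wolffTail_anti : Antitone (wolffTail μ s) := by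
  intro R R' h
  unfold wolffTail
  exact lintegral_mono fun x => lintegral_mono_set (fun r hr => lt_of_le_of_lt h hr)

set_option maxHeartbeats 1000000 in
lemma wolffTail_nat_tendsto (hW : (∫⁻ x, wolffPot μ s x ∂μ) < ⊤) :
    Tendsto (fun n : ℕ => wolffTail μ s n) atTop (nhds 0) := by
  have h0 : (0 : ℝ≥0∞) = ∫⁻ (_ : EuclideanSpace ℝ (Fin d)), 0 ∂μ := by simp
  rw [h0]
  unfold wolffTail
  apply tendsto_lintegral_of_dominated_convergence (bound := wolffPot μ s)
  · exact fun n => meas_inner _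
  · intro n
    refine Filter.Eventually.of_forall fun x => ?_
    exact lintegral_mono_set (fun r hr => mem_Ioi.mpr (lt_of_le_of_lt (Nat.cast_nonneg n) hr))
  · exact hW.ne
  · have hmeas : Measurable (wolffPot μ s) := meas_inner (μ := μ) 0
    filter_upwards [ae_lt_top hmeas hW.ne] with x hx
    have hfx : Measurable fun r => ENNReal.ofReal (ballDensity μ s x r ^ 2 / r) := by
      have hmono : Monotone fun r : ℝ => μ (ball x r) :=
        fun a b h => measure_mono (ball_subset_ball h)
      unfold ballDensity
      apply ENNReal.measurable_ofReal.comp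
      apply Measurable.div _ measurable_id
      apply Measurable.pow _ measurable_const
      exact hmono.measurable.ennreal_toReal.div (by measurability)
    set ν : Measure ℝ := volume.withDensity
      (fun r => ENNReal.ofReal (ballDensity μ s x r ^ 2 / r)) with hν
    have hap : ∀ R : ℝ, (∫⁻ r in Ioi R, ENNReal.ofReal (ballDensity μ s x r ^ 2 / r))
        = ν (Ioi R) := by
      intro R
      rw [hν, withDensity_apply _ measurableSet_Ioi]
    simp_rw [hap]
    have hempty : ⋂ n : ℕ, Ioi (n : ℝ) = ∅ := by
      ext y
      simp only [mem_iInter, mem_Ioi, mem_empty_iff_false, iff_false, not_forall, not_lt]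
      obtain ⟨n, hn⟩ := exists_nat_gt y
      exact ⟨n, hn.le⟩
    have := tendsto_measure_iInter_atTop (μ := ν) (s := fun n : ℕ => Ioi (n : ℝ))
      (fun n => measurableSet_Ioi.nullMeasurableSet)
      (fun n m h => Ioi_subset_Ioi (by exact_mod_cast h))
      ⟨0, by rw [← hap]; simpa [wolffPot] using hx.ne⟩
    rwa [hempty, measure_empty] at this
  done

lemma wolffTail_tendsto (hW : (∫⁻ x, wolffPot μ s x ∂μ) < ⊤) :
    Tendsto (wolffTail μ s) atTop (nhds 0) := by
  have h1 : Tendsto (fun R : ℝ => wolffTail μ s (⌊R⌋₊ : ℕ)) atTop (nhds 0) :=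
    (wolffTail_nat_tendsto hW).comp tendsto_nat_floor_atTop
  apply tendsto_of_tendsto_of_tendsto_of_le_of_le' tendsto_const_nhds h1
  · exact Filter.Eventually.of_forall fun R => zero_le
  · filter_upwards [eventually_ge_atTop (0 : ℝ)] with R hR
    exact wolffTail_anti (Nat.floor_le hR)

end Aux

theorem statement12 (d : ℕ) (s : ℝ) (hs0 : 0 < s) (hsd : s < d)
    (μ : Measure (EuclideanSpace ℝ (Fin d))) [IsLocallyFiniteMeasure μ]
    (hW : (∫⁻ x, wolffPot μ s x ∂μ) < ⊤) :
    Filter.Tendsto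
      (fun r : ℝ => μ (ball (0 : EuclideanSpace ℝ (Fin d)) r) ^ 3 / ENNReal.ofReal (r ^ (2 * s)))
      Filter.atTop (nhds 0) := by
  set C : ℝ≥0∞ := ENNReal.ofReal (3 ^ (2 * s + 1)) with hC
  have hCne : C ≠ ⊤ := ofReal_ne_top
  -- upper bound function tends to 0
  have hupper : Tendsto (fun r : ℝ => C * wolffTail μ s (2 * r)) atTop (nhds 0) := by
    have h2r : Tendsto (fun r : ℝ => 2 * r) atTop atTop :=
      (tendsto_id.const_mul_atTop (by norm_num))
    have := ENNReal.Tendsto.const_mul (a := C) ((wolffTail_tendsto hW).comp h2r) (Or.inr hCne)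
    simpa [Function.comp] using this
  apply tendsto_of_tendsto_of_tendsto_of_le_of_le' tendsto_const_nhds hupper
  · exact Filter.Eventually.of_forall fun r => zero_le
  · filter_upwards [eventually_gt_atTop (0 : ℝ)] with r hr
    -- the key inequality
    set m : ℝ≥0∞ := μ (ball (0 : EuclideanSpace ℝ (Fin d)) r) with hm
    have hmfin : m ≠ ⊤ := (measure_ball_lt_top).ne
    have h3r : (0 : ℝ) < 3 * r := by linarith
    have hrpow : (0 : ℝ) < r ^ (2 * s) := Real.rpow_pos_of_pos hr _
    have h3rpow : (0 : ℝ) < (3 * r) ^ (2 * s) := Real.rpow_pos_of_pos h3r _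
    -- pointwise lower bound on the integrand for x ∈ ball 0 r, ρ ∈ Ioo (2r) (3r)
    have hkey : ∀ x ∈ ball (0 : EuclideanSpace ℝ (Fin d)) r, ∀ ρ ∈ Ioo (2 * r) (3 * r),
        ENNReal.ofReal (m.toReal ^ 2 / (3 * r) ^ (2 * s) / (3 * r))
          ≤ ENNReal.ofReal (ballDensity μ s x ρ ^ 2 / ρ) := by
      intro x hx ρ hρ
      apply ENNReal.ofReal_le_ofReal
      have hρ0 : 0 < ρ := lt_trans (by linarith) hρ.1
      have hsub : ball (0 : EuclideanSpace ℝ (Fin d)) r ⊆ ball x ρ := by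
        intro y hy
        rw [mem_ball] at *
        calc dist y x ≤ dist y 0 + dist 0 x := dist_triangle _ _ _
          _ < r + r := by
              have := mem_ball.mp hx
              rw [dist_comm] at this
              linarith [mem_ball.mp hy]
          _ ≤ ρ := by linarith [hρ.1]
      have hmono : m.toReal ≤ (μ (ball x ρ)).toReal :=
        ENNReal.toReal_mono (measure_ball_lt_top).ne (measure_mono hsub)
      have hρs : ρ ^ s ≤ (3 * r) ^ s := Real.rpow_le_rpow hρ0.le hρ.2.le hs0.le
      have hρs0 : 0 < ρ ^ s := Real.rpow_pos_of_pos hρ0 _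
      have hdens : m.toReal / (3 * r) ^ s ≤ ballDensity μ s x ρ := by
        unfold ballDensity
        exact div_le_div₀ (ENNReal.toReal_nonneg.trans hmono) hmono hρs0 hρs
      have hdens0 : (0:ℝ) ≤ m.toReal / (3 * r) ^ s :=
        div_nonneg ENNReal.toReal_nonneg (Real.rpow_pos_of_pos h3r _).le
      have hsq : m.toReal ^ 2 / (3 * r) ^ (2 * s) ≤ ballDensity μ s x ρ ^ 2 := by
        have h1 : (m.toReal / (3 * r) ^ s) ^ 2 ≤ ballDensity μ s x ρ ^ 2 :=
          pow_le_pow_left₀ hdens0 hdens 2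
        calc m.toReal ^ 2 / (3 * r) ^ (2 * s) = (m.toReal / (3 * r) ^ s) ^ 2 := by
              rw [div_pow, ← Real.rpow_natCast ((3*r) ^ s) 2, ← Real.rpow_mul h3r.le]
              norm_num [mul_comm]
          _ ≤ _ := h1
      apply div_le_div₀ (sq_nonneg _) hsq hρ0
      exact hρ.2.le
    -- integrate the lower bound
    have hlow : m * (ENNReal.ofReal (m.toReal ^ 2 / (3 * r) ^ (2 * s) / (3 * r))
        * ENNReal.ofReal r) ≤ wolffTail μ s (2 * r) := by
      calc m * (ENNReal.ofReal (m.toReal ^ 2 / (3 * r) ^ (2 * s) / (3 * r)) * ENNReal.ofReal r)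
          = ∫⁻ x in ball (0 : EuclideanSpace ℝ (Fin d)) r,
              (∫⁻ ρ in Ioo (2*r) (3*r),
                ENNReal.ofReal (m.toReal ^ 2 / (3 * r) ^ (2 * s) / (3 * r))) ∂μ := by
            rw [lintegral_const, lintegral_const]
            simp only [Measure.restrict_apply MeasurableSet.univ, univ_inter,
              Real.volume_Ioo]
            rw [show 3 * r - 2 * r = r by ring]
            ring
        _ ≤ ∫⁻ x in ball (0 : EuclideanSpace ℝ (Fin d)) r,
              (∫⁻ ρ in Ioo (2*r) (3*r),
                ENNReal.ofReal (ballDensity μ s x ρ ^ 2 / ρ)) ∂μ := by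
            apply setLIntegral_mono' measurableSet_ball
            intro x hx
            apply setLIntegral_mono' measurableSet_Ioo
            intro ρ hρ
            exact hkey x hx ρ hρ
        _ ≤ ∫⁻ x in ball (0 : EuclideanSpace ℝ (Fin d)) r,
              (∫⁻ ρ in Ioi (2*r),
                ENNReal.ofReal (ballDensity μ s x ρ ^ 2 / ρ)) ∂μ := by
            apply lintegral_mono fun x => lintegral_mono_set (fun ρ hρ => hρ.1)
        _ ≤ wolffTail μ s (2 * r) := setLIntegral_le_lintegral _ _
    -- rearrange
    have hcalc : ENNReal.ofReal (m.toReal ^ 2 / (3 * r) ^ (2 * s) / (3 * r))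
        * ENNReal.ofReal r = m ^ 2 / ENNReal.ofReal (3 ^ (2*s+1) * r ^ (2 * s)) := by
      rw [← ENNReal.ofReal_mul (by positivity)]
      have hr3 : (3 * r) ^ (2 * s) = 3 ^ (2*s) * r ^ (2*s) :=
        Real.mul_rpow (by norm_num) hr.le
      have : m.toReal ^ 2 / (3 * r) ^ (2 * s) / (3 * r) * r
          = m.toReal ^ 2 / (3 ^ (2*s+1) * r ^ (2 * s)) := by
        rw [hr3, Real.rpow_add (by norm_num : (0:ℝ) < 3), Real.rpow_one]
        field_simp
      rw [this, ENNReal.ofReal_div_of_pos (by positivity),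
        show m.toReal ^ 2 = m.toReal * m.toReal by ring,
        ENNReal.ofReal_mul ENNReal.toReal_nonneg, ENNReal.ofReal_toReal hmfin, ← sq]
    rw [hcalc] at hlow
    -- now: m * (m^2 / ofReal(3^(2s+1) r^(2s))) ≤ wolffTail
    have hlow2 : m ^ 3 / ENNReal.ofReal (3 ^ (2*s+1) * r ^ (2 * s)) ≤ wolffTail μ s (2*r) := by
      calc m ^ 3 / ENNReal.ofReal (3 ^ (2*s+1) * r ^ (2 * s))
          = m * (m ^ 2 / ENNReal.ofReal (3 ^ (2*s+1) * r ^ (2 * s))) := by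
            rw [show m ^ 3 = m * m ^ 2 by ring, mul_div_assoc]
        _ ≤ _ := hlow
    have hB : ENNReal.ofReal (3 ^ (2*s+1) * r ^ (2 * s))
        = C * ENNReal.ofReal (r ^ (2*s)) := by
      rw [hC, ← ENNReal.ofReal_mul (by positivity)]
    rw [hB] at hlow2
    -- conclude: m^3 / ofReal (r^(2s)) ≤ C * wolffTail
    have hRne : ENNReal.ofReal (r ^ (2*s)) ≠ 0 := by
      simp [ENNReal.ofReal_eq_zero, not_le, hrpow]
    have hRnetop : ENNReal.ofReal (r ^ (2*s)) ≠ ⊤ := ofReal_ne_top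
    have hCne0 : C ≠ 0 := by
      simp [hC, ENNReal.ofReal_eq_zero, not_le]
      positivity
    calc m ^ 3 / ENNReal.ofReal (r ^ (2 * s))
        = C * (m ^ 3 / (C * ENNReal.ofReal (r ^ (2*s)))) := by
          rw [← mul_div_assoc, ENNReal.mul_div_mul_left _ _ hCne0 hCne]
      _ ≤ C * wolffTail μ s (2 * r) := mul_le_mul_right hlow2 C
end
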